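/- With the notation of the setup (integers n ≥ 1, m ≥ 1 with 25·m² < 2·(2n+1)², q = (2n+1)², the vector ξ = ξ₀/‖ξ₀‖ in ℂ^q, and z the matrix of the cyclic shift by m), one has ‖ξ − z·ξ‖ ≤ 2·√3·(1 + 1/(2n))·(m/(2n+1)). -/

import Mathlib

open Finset

lemma div_le_div_of_nonneg_right' {a b c : ℝ} (h : a ≤ b) (hc : 0 < c) :
    a / c ≤ b / c := by
  rw [div_le_div_iff₀ hc hc]; nlinarith

lemma gauss1 (m : ℕ) : ∑ i ∈ Finset.range m, ((i:ℝ)+1) = (m:ℝ)*((m:ℝ)+1)/2 := by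
  induction m with
  | zero => simp
  | succ k ih => rw [Finset.sum_range_succ, ih]; push_cast; ring

lemma gauss2 (m : ℕ) : ∑ i ∈ Finset.range m, ((i:ℝ)+1)^2 = (m:ℝ)*((m:ℝ)+1)*(2*(m:ℝ)+1)/6 := by
  induction m with
  | zero => simp
  | succ k ih => rw [Finset.sum_range_succ, ih]; push_cast; ring

lemma gsub1 (m : ℕ) : ∑ i ∈ Finset.range m, ((m-i:ℕ):ℝ) = (m:ℝ)*((m:ℝ)+1)/2 := by
  have h := Finset.sum_range_reflect (fun j => ((j:ℝ)+1)) m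
  calc ∑ i ∈ Finset.range m, ((m-i:ℕ):ℝ) = ∑ i ∈ Finset.range m, (((m-1-i:ℕ):ℝ)+1) := by
        apply Finset.sum_congr rfl; intro i hi
        have hi' := Finset.mem_range.mp hi
        have : (m - i : ℕ) = (m-1-i) + 1 := by omega
        rw [this]; push_cast; ring
    _ = (m:ℝ)*((m:ℝ)+1)/2 := by rw [h, gauss1]

lemma gsub2 (m : ℕ) : ∑ i ∈ Finset.range m, ((m-i:ℕ):ℝ)^2 = (m:ℝ)*((m:ℝ)+1)*(2*(m:ℝ)+1)/6 := by
  have h := Finset.sum_range_reflect (fun j => ((j:ℝ)+1)^2) m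
  calc ∑ i ∈ Finset.range m, ((m-i:ℕ):ℝ)^2 = ∑ i ∈ Finset.range m, (((m-1-i:ℕ):ℝ)+1)^2 := by
        apply Finset.sum_congr rfl; intro i hi
        have hi' := Finset.mem_range.mp hi
        have : (m - i : ℕ) = (m-1-i) + 1 := by omega
        rw [this]; push_cast; ring
    _ = (m:ℝ)*((m:ℝ)+1)*(2*(m:ℝ)+1)/6 := by rw [h, gauss2]

noncomputable def tentF (n q k : ℕ) : ℝ :=
  if k < n then ((n - k : ℕ):ℝ)/n else if k ≤ q - n then 0 else ((k - (q-n) : ℕ):ℝ)/n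

lemma tentF_low {n q k : ℕ} (h : k < n) : tentF n q k = ((n-k:ℕ):ℝ)/n := by
  simp [tentF, h]

lemma tentF_mid {n q k : ℕ} (h1 : ¬ k < n) (h2 : k ≤ q - n) : tentF n q k = 0 := by
  simp [tentF, h1, h2]

lemma tentF_high {n q k : ℕ} (h1 : ¬ k < n) (h2 : ¬ k ≤ q - n) :
    tentF n q k = ((k-(q-n):ℕ):ℝ)/n := by
  simp [tentF, h1, h2]

set_option maxHeartbeats 1000000 in
theorem stmt_17 (n m : ℕ) (hn : 1 ≤ n) (hm : 1 ≤ m)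
    (h25 : 25 * m ^ 2 < 2 * (2 * n + 1) ^ 2)
    (q : ℕ) (hq : q = (2 * n + 1) ^ 2)
    (ξ₀ : EuclideanSpace ℂ (Fin q))
    (hξ₀ : ∀ k : Fin q, ξ₀ k =
      if (k : ℕ) < n then (((n - (k : ℕ) : ℕ) : ℂ) / (n : ℂ))
      else if (k : ℕ) ≤ q - n then 0
      else ((((k : ℕ) - (q - n) : ℕ) : ℂ) / (n : ℂ)))
    (ξ : EuclideanSpace ℂ (Fin q)) (hξ : ξ = ((‖ξ₀‖ : ℂ))⁻¹ • ξ₀)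
    (z : Matrix (Fin q) (Fin q) ℂ)
    (hz : z = Matrix.of fun i j : Fin q =>
      if (i : ℕ) = ((j : ℕ) + m) % q then (1 : ℂ) else 0) :
    ‖ξ - Matrix.toEuclideanLin z ξ‖
      ≤ 2 * Real.sqrt 3 * (1 + 1 / (2 * (n : ℝ))) * ((m : ℝ) / (2 * (n : ℝ) + 1)) := by
  have hn2 : 2 ≤ n := by
    by_contra h
    have hn1 : n = 1 := by omega
    subst hn1; nlinarith
  have hmn : m + 1 ≤ n := by
    by_contra h
    push_neg at h
    have : n ≤ m := by omega
    nlinarith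
  have hq6 : 6 * n ≤ q := by rw [hq]; nlinarith
  have hqpos : 0 < q := by omega
  haveI : NeZero q := ⟨by omega⟩
  have hN0 : (0:ℝ) < (n:ℝ) := by exact_mod_cast Nat.pos_of_ne_zero (by omega)
  have hM0 : (0:ℝ) < (m:ℝ) := by exact_mod_cast Nat.pos_of_ne_zero (by omega)
  open Fin.NatCast in set mb : Fin q := (m : Fin q) with hmb
  have hmbval : (mb : ℕ) = m := by
    rw [hmb, Fin.val_natCast, Nat.mod_eq_of_lt (by omega)]
  -- coordinates of the shifted vector
  have hcoord : ∀ (v : EuclideanSpace ℂ (Fin q)) (i : Fin q),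
      (Matrix.toEuclideanLin z v) i = v (i - mb) := by
    intro v i
    rw [Matrix.toEuclideanLin_apply]
    show (z.mulVec fun j => v j) i = v (i - mb)
    rw [hz]
    simp only [Matrix.mulVec, dotProduct, Matrix.of_apply]
    have step : ∀ j : Fin q,
        (if (i : ℕ) = ((j : ℕ) + m) % q then (1:ℂ) else 0) * v j
          = if j = i - mb then v j else 0 := by
      intro j
      have hcond : ((i : ℕ) = ((j : ℕ) + m) % q) ↔ (j = i - mb) := by
        have h1 : ((j : ℕ) + m) % q = ((j + mb : Fin q) : ℕ) := by
          rw [Fin.add_def, hmbval]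
        rw [h1]
        constructor
        · intro h
          have : i = j + mb := Fin.ext h
          rw [this]; exact (add_sub_cancel_right j mb).symm
        · intro h
          have : j + mb = i := by rw [h]; exact sub_add_cancel i mb
          rw [← this]
      split_ifs with h1 h2 h2
      · rw [one_mul]
      · exact absurd (hcond.mp h1) h2
      · exact absurd (hcond.mpr h2) h1
      · rw [zero_mul]
    rw [Finset.sum_congr rfl (fun j _ => step j), Finset.sum_ite_eq']
    simp
  -- ξ₀ coordinates via the real tent function
  have hF : ∀ k : Fin q, ξ₀ k = ((tentF n q (k : ℕ) : ℝ) : ℂ) := by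
    intro k
    rw [hξ₀ k]
    by_cases h1 : (k:ℕ) < n
    · rw [if_pos h1, tentF_low h1]; push_cast; ring
    · rw [if_neg h1]
      by_cases h2 : (k:ℕ) ≤ q - n
      · rw [if_pos h2, tentF_mid h1 h2]; norm_cast
      · rw [if_neg h2, tentF_high h1 h2]; push_cast; ring
  -- reduce the norm of the difference to a real sum
  have hsub : ξ - Matrix.toEuclideanLin z ξ
      = ((‖ξ₀‖:ℂ))⁻¹ • (ξ₀ - Matrix.toEuclideanLin z ξ₀) := by
    rw [hξ, map_smul, smul_sub]
  have hnormeq : ‖ξ - Matrix.toEuclideanLin z ξ‖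
      = ‖ξ₀‖⁻¹ * ‖ξ₀ - Matrix.toEuclideanLin z ξ₀‖ := by
    rw [hsub, norm_smul, norm_inv, Complex.norm_real, norm_norm]
  have hDsq : ‖ξ₀ - Matrix.toEuclideanLin z ξ₀‖^2
      = ∑ k ∈ Finset.range q, (tentF n q ((k + m) % q) - tentF n q k)^2 := by
    rw [EuclideanSpace.norm_eq, Real.sq_sqrt (by positivity)]
    have h1 : ∀ i : Fin q, ‖(ξ₀ - Matrix.toEuclideanLin z ξ₀) i‖^2
        = (tentF n q (i:ℕ) - tentF n q ((i - mb : Fin q):ℕ))^2 := by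
      intro i
      rw [PiLp.sub_apply, hcoord, hF, hF, ← Complex.ofReal_sub, Complex.norm_real,
        Real.norm_eq_abs, sq_abs]
    rw [Finset.sum_congr rfl (fun i _ => h1 i)]
    have h2 : ∀ i : Fin q,
        (tentF n q (i:ℕ) - tentF n q ((i - mb : Fin q):ℕ))^2
        = (fun k => (tentF n q ((k + m) % q) - tentF n q k)^2) (((i - mb : Fin q)):ℕ) := by
      intro i
      have hval : (((i - mb : Fin q):ℕ) + m) % q = (i:ℕ) := by
        have : ((i - mb) + mb : Fin q) = i := sub_add_cancel i mb
        calc (((i - mb : Fin q):ℕ) + m) % q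
            = (((i - mb : Fin q):ℕ) + (mb:ℕ)) % q := by rw [hmbval]
          _ = (((i - mb) + mb : Fin q) : ℕ) := by rw [Fin.add_def]
          _ = (i:ℕ) := by rw [this]
      simp only [hval]
    rw [Finset.sum_congr rfl (fun i _ => h2 i)]
    have h3 : ∑ i : Fin q, (fun k => (tentF n q ((k + m) % q) - tentF n q k)^2) (((i - mb : Fin q)):ℕ)
        = ∑ j : Fin q, (fun k => (tentF n q ((k + m) % q) - tentF n q k)^2) ((j : Fin q):ℕ) :=
      Fintype.sum_equiv (Equiv.subRight mb) _ _ (fun i => rfl)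
    rw [h3]
    exact Fin.sum_univ_eq_sum_range (fun k => (tentF n q ((k + m) % q) - tentF n q k)^2) q
  have hRsq : ‖ξ₀‖^2 = ∑ k ∈ Finset.range q, (tentF n q k)^2 := by
    rw [EuclideanSpace.norm_eq, Real.sq_sqrt (by positivity)]
    have h1 : ∀ i : Fin q, ‖ξ₀ i‖^2 = (fun k => (tentF n q k)^2) ((i:Fin q):ℕ) := by
      intro i
      rw [hF, Complex.norm_real, Real.norm_eq_abs, sq_abs]
    rw [Finset.sum_congr rfl (fun i _ => h1 i)]
    exact Fin.sum_univ_eq_sum_range (fun k => (tentF n q k)^2) q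
  have hSdle : (∑ k ∈ Finset.range q, (tentF n q ((k + m) % q) - tentF n q k)^2)
      ≤ 2*(m:ℝ)^2/(n:ℝ) := by
    set g : ℕ → ℝ := fun k => (tentF n q ((k + m) % q) - tentF n q k)^2 with hg
    rw [Finset.range_eq_Ico,
      ← Finset.sum_Ico_consecutive g (by omega : 0 ≤ n-m) (by omega : n-m ≤ q),
      ← Finset.sum_Ico_consecutive g (by omega : n-m ≤ n) (by omega : n ≤ q),
      ← Finset.sum_Ico_consecutive g (by omega : n ≤ q-n-m+1) (by omega : q-n-m+1 ≤ q),
      ← Finset.sum_Ico_consecutive g (by omega : q-n-m+1 ≤ q-n+1) (by omega : q-n+1 ≤ q),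
      ← Finset.sum_Ico_consecutive g (by omega : q-n+1 ≤ q-m) (by omega : q-m ≤ q)]
    have b1 : ∑ k ∈ Finset.Ico 0 (n-m), g k ≤ ((n:ℝ)-(m:ℝ))*((m:ℝ)^2/(n:ℝ)^2) := by
      have hpt : ∀ k ∈ Finset.Ico 0 (n-m), g k ≤ (m:ℝ)^2/(n:ℝ)^2 := by
        intro k hk
        have hk' : k < n - m := (Finset.mem_Ico.mp hk).2
        have hmod : (k + m) % q = k + m := Nat.mod_eq_of_lt (by omega)
        simp only [hg, hmod]
        rw [tentF_low (by omega : k + m < n), tentF_low (by omega : k < n)]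
        have e1 : ((n-(k+m):ℕ):ℝ) = (n:ℝ) - (k:ℝ) - (m:ℝ) := by
          rw [Nat.cast_sub (by omega)]; push_cast; ring
        have e2 : ((n-k:ℕ):ℝ) = (n:ℝ) - (k:ℝ) := by
          rw [Nat.cast_sub (by omega)]
        rw [e1, e2]
        exact le_of_eq (by ring)
      calc ∑ k ∈ Finset.Ico 0 (n-m), g k
          ≤ (Finset.Ico 0 (n-m)).card • ((m:ℝ)^2/(n:ℝ)^2) :=
            Finset.sum_le_card_nsmul _ _ _ hpt
        _ = ((n:ℝ)-(m:ℝ))*((m:ℝ)^2/(n:ℝ)^2) := by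
            rw [Nat.card_Ico, nsmul_eq_mul, Nat.sub_zero,
              Nat.cast_sub (by omega : m ≤ n)]
    have b2 : ∑ k ∈ Finset.Ico (n-m) n, g k
        ≤ (m:ℝ)*((m:ℝ)*((m:ℝ)+1)/2)/(n:ℝ)^2 := by
      have hpt : ∀ k ∈ Finset.Ico (n-m) n, g k ≤ (m:ℝ)*((n-k:ℕ):ℝ)/(n:ℝ)^2 := by
        intro k hk
        obtain ⟨hk1, hk2⟩ := Finset.mem_Ico.mp hk
        have hmod : (k + m) % q = k + m := Nat.mod_eq_of_lt (by omega)
        simp only [hg, hmod]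
        rw [tentF_mid (by omega : ¬ k + m < n) (by omega : k + m ≤ q - n), tentF_low hk2]
        have ht : ((n-k:ℕ):ℝ) ≤ (m:ℝ) := by exact_mod_cast (by omega : n - k ≤ m)
        have ht0 : (0:ℝ) ≤ ((n-k:ℕ):ℝ) := Nat.cast_nonneg _
        have hexp : ((0:ℝ) - ((n-k:ℕ):ℝ)/(n:ℝ))^2 = ((n-k:ℕ):ℝ)^2/(n:ℝ)^2 := by ring
        rw [hexp]
        exact div_le_div_of_nonneg_right' (by nlinarith) (by positivity)
      calc ∑ k ∈ Finset.Ico (n-m) n, g k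
          ≤ ∑ k ∈ Finset.Ico (n-m) n, (m:ℝ)*((n-k:ℕ):ℝ)/(n:ℝ)^2 := Finset.sum_le_sum hpt
        _ = (m:ℝ)*((m:ℝ)*((m:ℝ)+1)/2)/(n:ℝ)^2 := by
            rw [Finset.sum_Ico_eq_sum_range]
            have he : n - (n-m) = m := by omega
            rw [he]
            have hc : ∀ i ∈ Finset.range m, (m:ℝ)*((n-(n-m+i):ℕ):ℝ)/(n:ℝ)^2
                = ((m:ℝ)/(n:ℝ)^2) * ((m-i:ℕ):ℝ) := by
              intro i hi
              have : n-(n-m+i) = m - i := by omega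
              rw [this]; ring
            rw [Finset.sum_congr rfl hc, ← Finset.mul_sum, gsub1]
            ring
    have b3 : ∑ k ∈ Finset.Ico n (q-n-m+1), g k = 0 := by
      apply Finset.sum_eq_zero
      intro k hk
      obtain ⟨hk1, hk2⟩ := Finset.mem_Ico.mp hk
      have hmod : (k + m) % q = k + m := Nat.mod_eq_of_lt (by omega)
      simp only [hg, hmod]
      rw [tentF_mid (by omega : ¬ k + m < n) (by omega : k + m ≤ q - n),
        tentF_mid (by omega : ¬ k < n) (by omega : k ≤ q - n)]
      ring
    have b4 : ∑ k ∈ Finset.Ico (q-n-m+1) (q-n+1), g k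
        ≤ (m:ℝ)*((m:ℝ)*((m:ℝ)+1)/2)/(n:ℝ)^2 := by
      have hpt : ∀ k ∈ Finset.Ico (q-n-m+1) (q-n+1), g k
          ≤ (m:ℝ)*((k+m-(q-n):ℕ):ℝ)/(n:ℝ)^2 := by
        intro k hk
        obtain ⟨hk1, hk2⟩ := Finset.mem_Ico.mp hk
        have hmod : (k + m) % q = k + m := Nat.mod_eq_of_lt (by omega)
        simp only [hg, hmod]
        rw [tentF_high (by omega : ¬ k + m < n) (by omega : ¬ k + m ≤ q - n),
          tentF_mid (by omega : ¬ k < n) (by omega : k ≤ q - n)]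
        have ht : ((k+m-(q-n):ℕ):ℝ) ≤ (m:ℝ) := by
          exact_mod_cast (by omega : k+m-(q-n) ≤ m)
        have ht0 : (0:ℝ) ≤ ((k+m-(q-n):ℕ):ℝ) := Nat.cast_nonneg _
        have hexp : (((k+m-(q-n):ℕ):ℝ)/(n:ℝ) - 0)^2 = ((k+m-(q-n):ℕ):ℝ)^2/(n:ℝ)^2 := by
          ring
        rw [hexp]
        exact div_le_div_of_nonneg_right' (by nlinarith) (by positivity)
      calc ∑ k ∈ Finset.Ico (q-n-m+1) (q-n+1), g k
          ≤ ∑ k ∈ Finset.Ico (q-n-m+1) (q-n+1), (m:ℝ)*((k+m-(q-n):ℕ):ℝ)/(n:ℝ)^2 :=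
            Finset.sum_le_sum hpt
        _ = (m:ℝ)*((m:ℝ)*((m:ℝ)+1)/2)/(n:ℝ)^2 := by
            rw [Finset.sum_Ico_eq_sum_range]
            have he : (q-n+1) - (q-n-m+1) = m := by omega
            rw [he]
            have hc : ∀ i ∈ Finset.range m, (m:ℝ)*(((q-n-m+1+i)+m-(q-n):ℕ):ℝ)/(n:ℝ)^2
                = ((m:ℝ)/(n:ℝ)^2) * ((i:ℝ)+1) := by
              intro i hi
              have : (q-n-m+1+i)+m-(q-n) = i+1 := by omega
              rw [this]; push_cast; ring
            rw [Finset.sum_congr rfl hc, ← Finset.mul_sum, gauss1]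
            ring
    have b5 : ∑ k ∈ Finset.Ico (q-n+1) (q-m), g k
        ≤ ((n:ℝ)-(m:ℝ)-1)*((m:ℝ)^2/(n:ℝ)^2) := by
      have hpt : ∀ k ∈ Finset.Ico (q-n+1) (q-m), g k ≤ (m:ℝ)^2/(n:ℝ)^2 := by
        intro k hk
        obtain ⟨hk1, hk2⟩ := Finset.mem_Ico.mp hk
        have hmod : (k + m) % q = k + m := Nat.mod_eq_of_lt (by omega)
        simp only [hg, hmod]
        rw [tentF_high (by omega : ¬ k + m < n) (by omega : ¬ k + m ≤ q - n),
          tentF_high (by omega : ¬ k < n) (by omega : ¬ k ≤ q - n)]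
        have e1 : ((k+m-(q-n):ℕ):ℝ) = (k:ℝ)+(m:ℝ)-(q:ℝ)+(n:ℝ) := by
          rw [Nat.cast_sub (by omega), Nat.cast_sub (by omega)]; push_cast; ring
        have e2 : ((k-(q-n):ℕ):ℝ) = (k:ℝ)-(q:ℝ)+(n:ℝ) := by
          rw [Nat.cast_sub (by omega), Nat.cast_sub (by omega)]; push_cast; ring
        rw [e1, e2]
        exact le_of_eq (by ring)
      calc ∑ k ∈ Finset.Ico (q-n+1) (q-m), g k
          ≤ (Finset.Ico (q-n+1) (q-m)).card • ((m:ℝ)^2/(n:ℝ)^2) :=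
            Finset.sum_le_card_nsmul _ _ _ hpt
        _ = ((n:ℝ)-(m:ℝ)-1)*((m:ℝ)^2/(n:ℝ)^2) := by
            rw [Nat.card_Ico, nsmul_eq_mul]
            have he : (q-m) - (q-n+1) = n-m-1 := by omega
            rw [he, Nat.cast_sub (by omega : 1 ≤ n - m), Nat.cast_sub (by omega : m ≤ n)]
            push_cast; ring
    have b6 : ∑ k ∈ Finset.Ico (q-m) q, g k ≤ (m:ℝ)*((m:ℝ)^2/(n:ℝ)^2) := by
      have hpt : ∀ k ∈ Finset.Ico (q-m) q, g k ≤ (m:ℝ)^2/(n:ℝ)^2 := by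
        intro k hk
        obtain ⟨hk1, hk2⟩ := Finset.mem_Ico.mp hk
        have hq1 : q ≤ k + m := by omega
        have hmod : (k + m) % q = k + m - q := by
          rw [Nat.mod_eq_sub_mod hq1, Nat.mod_eq_of_lt (by omega)]
        simp only [hg, hmod]
        rw [tentF_low (by omega : k+m-q < n),
          tentF_high (by omega : ¬ k < n) (by omega : ¬ k ≤ q - n)]
        have e1 : ((n-(k+m-q):ℕ):ℝ) = (n:ℝ)-(k:ℝ)-(m:ℝ)+(q:ℝ) := by
          rw [Nat.cast_sub (by omega), Nat.cast_sub hq1]; push_cast; ring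
        have e2 : ((k-(q-n):ℕ):ℝ) = (k:ℝ)-(q:ℝ)+(n:ℝ) := by
          rw [Nat.cast_sub (by omega), Nat.cast_sub (by omega)]; push_cast; ring
        rw [e1, e2]
        have hb1 : (q:ℝ) ≤ (k:ℝ)+(m:ℝ) := by exact_mod_cast hq1
        have hb2 : (k:ℝ)+1 ≤ (q:ℝ) := by exact_mod_cast hk2
        have hm1 : (1:ℝ) ≤ (m:ℝ) := by exact_mod_cast hm
        have hexp : (((n:ℝ)-(k:ℝ)-(m:ℝ)+(q:ℝ))/(n:ℝ) - ((k:ℝ)-(q:ℝ)+(n:ℝ))/(n:ℝ))^2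
            = (2*(q:ℝ)-2*(k:ℝ)-(m:ℝ))^2/(n:ℝ)^2 := by ring
        rw [hexp]
        exact div_le_div_of_nonneg_right' (by nlinarith) (by positivity)
      calc ∑ k ∈ Finset.Ico (q-m) q, g k
          ≤ (Finset.Ico (q-m) q).card • ((m:ℝ)^2/(n:ℝ)^2) :=
            Finset.sum_le_card_nsmul _ _ _ hpt
        _ = (m:ℝ)*((m:ℝ)^2/(n:ℝ)^2) := by
            rw [Nat.card_Ico, nsmul_eq_mul]
            have he : q - (q-m) = m := by omega
            rw [he]
    have hcomb : ((n:ℝ)-(m:ℝ))*((m:ℝ)^2/(n:ℝ)^2) + (m:ℝ)*((m:ℝ)*((m:ℝ)+1)/2)/(n:ℝ)^2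
        + 0 + (m:ℝ)*((m:ℝ)*((m:ℝ)+1)/2)/(n:ℝ)^2 + ((n:ℝ)-(m:ℝ)-1)*((m:ℝ)^2/(n:ℝ)^2)
        + (m:ℝ)*((m:ℝ)^2/(n:ℝ)^2) = 2*(m:ℝ)^2/(n:ℝ) := by
      field_simp
      ring
    linarith [b1, b2, b3, b4, b5, b6, hcomb]
  have hSrge : 2*(n:ℝ)/3 ≤ ∑ k ∈ Finset.range q, (tentF n q k)^2 := by
    rw [Finset.range_eq_Ico,
      ← Finset.sum_Ico_consecutive (fun k => (tentF n q k)^2)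
        (by omega : 0 ≤ n) (by omega : n ≤ q),
      ← Finset.sum_Ico_consecutive (fun k => (tentF n q k)^2)
        (by omega : n ≤ q-n+1) (by omega : q-n+1 ≤ q)]
    have hS1 : ∑ k ∈ Finset.Ico 0 n, (tentF n q k)^2
        = ((n:ℝ)*((n:ℝ)+1)*(2*(n:ℝ)+1)/6) / (n:ℝ)^2 := by
      rw [Finset.sum_Ico_eq_sum_range]
      have hc : ∀ i ∈ Finset.range (n - 0), (tentF n q (0+i))^2 = ((n-i:ℕ):ℝ)^2 / (n:ℝ)^2 := by
        intro i hi
        have hi' : i < n := by have := Finset.mem_range.mp hi; omega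
        rw [Nat.zero_add, tentF_low hi', div_pow]
      rw [Finset.sum_congr rfl hc, ← Finset.sum_div, Nat.sub_zero, gsub2]
    have hS3 : ∑ k ∈ Finset.Ico (q-n+1) q, (tentF n q k)^2
        = (((n:ℝ)-1)*(n:ℝ)*(2*(n:ℝ)-1)/6) / (n:ℝ)^2 := by
      rw [Finset.sum_Ico_eq_sum_range]
      have hc : ∀ i ∈ Finset.range (q - (q-n+1)), (tentF n q (q-n+1+i))^2
          = (((i:ℝ)+1))^2 / (n:ℝ)^2 := by
        intro i hi
        have hi' : i < q - (q-n+1) := Finset.mem_range.mp hi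
        have h1 : ¬ (q-n+1+i) < n := by omega
        have h2 : ¬ (q-n+1+i) ≤ q - n := by omega
        rw [tentF_high h1 h2, div_pow]
        congr 2
        have : q-n+1+i - (q-n) = i+1 := by omega
        rw [this]; push_cast; ring
      rw [Finset.sum_congr rfl hc, ← Finset.sum_div, gauss2]
      have he : q - (q-n+1) = n - 1 := by omega
      rw [he]
      have hc1 : ((n-1:ℕ):ℝ) = (n:ℝ) - 1 := by
        rw [Nat.cast_sub (by omega)]; norm_num
      rw [hc1]; ring
    have hS2 : (0:ℝ) ≤ ∑ k ∈ Finset.Ico n (q-n+1), (tentF n q k)^2 := by positivity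
    rw [hS1, hS3]
    have hkey : 2*(n:ℝ)/3 ≤ (n:ℝ)*((n:ℝ)+1)*(2*(n:ℝ)+1)/6 / (n:ℝ)^2
        + ((n:ℝ)-1)*(n:ℝ)*(2*(n:ℝ)-1)/6 / (n:ℝ)^2 := by
      rw [← add_div, le_div_iff₀ (by positivity)]
      nlinarith [hN0]
    linarith [hS2, hkey]
  have hR0 : 0 < ‖ξ₀‖ := by
    have h0 := norm_nonneg ξ₀
    nlinarith [hRsq, hSrge]
  rw [hnormeq]
  have key : (‖ξ₀‖⁻¹ * ‖ξ₀ - Matrix.toEuclideanLin z ξ₀‖)^2 ≤ (Real.sqrt 3 * (m:ℝ) / (n:ℝ))^2 := by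
    rw [mul_pow, inv_pow, hDsq, hRsq]
    have h3 : (Real.sqrt 3 * (m:ℝ) / (n:ℝ))^2 = 3*(m:ℝ)^2/(n:ℝ)^2 := by
      rw [div_pow, mul_pow, Real.sq_sqrt (by norm_num)]
    rw [h3]
    have hD0 : (0:ℝ) ≤ ∑ k ∈ Finset.range q, (tentF n q ((k + m) % q) - tentF n q k)^2 := by
      positivity
    calc (∑ k ∈ Finset.range q, (tentF n q k)^2)⁻¹
          * (∑ k ∈ Finset.range q, (tentF n q ((k + m) % q) - tentF n q k)^2)
        ≤ (2*(n:ℝ)/3)⁻¹ * (2*(m:ℝ)^2/(n:ℝ)) := by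
          apply mul_le_mul _ hSdle hD0 (by positivity)
          exact inv_anti₀ (by positivity) hSrge
      _ = 3*(m:ℝ)^2/(n:ℝ)^2 := by field_simp
  have hle : ‖ξ₀‖⁻¹ * ‖ξ₀ - Matrix.toEuclideanLin z ξ₀‖ ≤ Real.sqrt 3 * (m:ℝ) / (n:ℝ) := by
    have h1 : (0:ℝ) ≤ ‖ξ₀‖⁻¹ * ‖ξ₀ - Matrix.toEuclideanLin z ξ₀‖ := by positivity
    have h2 : (0:ℝ) ≤ Real.sqrt 3 * (m:ℝ) / (n:ℝ) := by positivity
    have := Real.sqrt_le_sqrt key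
    rwa [Real.sqrt_sq h1, Real.sqrt_sq h2] at this
  have hfin : Real.sqrt 3 * (m:ℝ) / (n:ℝ) = 2 * Real.sqrt 3 * (1 + 1 / (2 * (n:ℝ))) * ((m:ℝ) / (2 * (n:ℝ) + 1)) := by
    have h2N : (2*(n:ℝ)+1) ≠ 0 := by positivity
    field_simp
  rw [← hfin]
  exact hle
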